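/- Let a, b > 1 be real numbers and let p, q be complex numbers with Re(p) > 0, Re(q) > 0 such that the ratio q/p is a positive real number. For y ≥ 0 let j(y) denote the number of positive integers n satisfying (n+a)(n+b)^{q/p} ≤ e^y. Then for every complex z with |z| < 1, the generalized polylogarithm satisfies Φ_{p,q}(a,b;z) = (1+a)^p (1+b)^q ( z/(1−z) + (p z/(z−1)) ∫_0^∞ e^{−p y} z^{j(y)} dy ). -/

import Mathlib

open MeasureTheory

/-- The generalized polylogarithm `Φ_{p,q}(a,b;z) = Σ_{k=1}^∞ (1+a)^p (1+b)^q z^k / ((k+a)^p (k+b)^q)`. -/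
noncomputable def genPolylog (p q : ℂ) (a b : ℝ) (z : ℂ) : ℂ :=
  ∑' k : ℕ, (((1 + a : ℝ) : ℂ) ^ p * ((1 + b : ℝ) : ℂ) ^ q /
      ((((k : ℝ) + 1 + a : ℝ) : ℂ) ^ p * (((k : ℝ) + 1 + b : ℝ) : ℂ) ^ q)) * z ^ (k + 1)

/-- `j y` counts the positive integers `n` with `(n+a)(n+b)^{q/p} ≤ e^y`. -/
noncomputable def jCount (p q : ℂ) (a b : ℝ) (y : ℝ) : ℕ :=
  Set.ncard {n : ℕ | 0 < n ∧ ((n : ℝ) + a) * ((n : ℝ) + b) ^ ((q / p).re) ≤ Real.exp y}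

section Aux

open Set Filter

private lemma cexp_deriv' (p : ℂ) (hp0 : p ≠ 0) (y : ℝ) :
    HasDerivAt (fun t : ℝ => -Complex.exp (-(p * t)) / p) (Complex.exp (-(p * y))) y := by
  have h1 : HasDerivAt (fun t : ℝ => ((t : ℂ))) 1 y := Complex.ofRealCLM.hasDerivAt
  have h2 : HasDerivAt (fun t : ℝ => -(p * (t:ℂ))) (-p) y := by
    have h := (h1.const_mul p).neg; rw [mul_one] at h; exact h
  have h4 := (h2.cexp.neg).div_const p
  convert h4 using 1
  · rfl
  · rfl
  · simp [hp0]

private lemma integrable_cexp_neg' (p : ℂ) (hp : 0 < p.re) (c : ℝ) :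
    IntegrableOn (fun y : ℝ => Complex.exp (-(p * y))) (Ioi c) := by
  apply Integrable.mono' (g := fun y : ℝ => Real.exp (-p.re * y))
    ((exp_neg_integrableOn_Ioi c hp))
  · exact (Continuous.aestronglyMeasurable (by continuity)).restrict
  · filter_upwards with y
    rw [Complex.norm_exp]
    simp [neg_mul]

private lemma cexp_tendsto' (p : ℂ) (hp : 0 < p.re) :
    Tendsto (fun t : ℝ => -Complex.exp (-(p * t)) / p) atTop (nhds 0) := by
  rw [tendsto_zero_iff_norm_tendsto_zero]
  have h : (fun t : ℝ => ‖-Complex.exp (-(p * t)) / p‖) = fun t => Real.exp (-(p.re * t)) / ‖p‖ := by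
    funext t
    rw [norm_div, norm_neg, Complex.norm_exp]
    simp [neg_mul]
  rw [h, show (0:ℝ) = 0 / ‖p‖ by simp]
  apply Tendsto.div_const
  exact Real.tendsto_exp_atBot.comp
    (tendsto_neg_atTop_atBot.comp (Tendsto.const_mul_atTop hp tendsto_id))

private lemma integral_cexp_neg_Ioi' (p : ℂ) (hp : 0 < p.re) (c : ℝ) :
    ∫ y in Ioi c, Complex.exp (-(p * y)) = Complex.exp (-(p * c)) / p := by
  have hp0 : p ≠ 0 := fun h => by simp [h] at hp
  have := integral_Ioi_of_hasDerivAt_of_tendsto (m := 0)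
    (f := fun t : ℝ => -Complex.exp (-(p * t)) / p)
    (f' := fun t : ℝ => Complex.exp (-(p * t))) (a := c)
    ((cexp_deriv' p hp0 c).continuousAt.continuousWithinAt)
    (fun x _ => cexp_deriv' p hp0 x) (integrable_cexp_neg' p hp c) (cexp_tendsto' p hp)
  rw [this]
  field_simp
  ring

private lemma delta_mono {a b r : ℝ} (ha : 1 < a) (hb : 1 < b) (hr : 0 < r) :
    StrictMono (fun n : ℕ => ((n:ℝ) + a) * ((n:ℝ) + b) ^ r) := by
  intro n m hnm
  have h3 : (0:ℝ) < (n:ℝ) + b := by have := n.cast_nonneg (α := ℝ); linarith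
  have hc : ((n:ℝ)) < (m:ℝ) := by exact_mod_cast hnm
  have h1 : (0:ℝ) ≤ (n:ℝ) + a := by have := n.cast_nonneg (α := ℝ); linarith
  apply mul_lt_mul'' (by linarith) (Real.rpow_lt_rpow h3.le (by linarith) hr) h1
  exact (Real.rpow_pos_of_pos h3 r).le

private lemma delta_ge {a b r : ℝ} (ha : 1 < a) (hb : 1 < b) (hr : 0 < r) (n : ℕ) :
    (n:ℝ) ≤ ((n:ℝ) + a) * ((n:ℝ) + b) ^ r := by
  have hnn := n.cast_nonneg (α := ℝ)
  have h1 : (1:ℝ) ≤ ((n:ℝ) + b) ^ r := Real.one_le_rpow (by linarith) hr.le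
  nlinarith

private lemma delta_gt_one {a b r : ℝ} (ha : 1 < a) (hb : 1 < b) (hr : 0 < r) {n : ℕ}
    (hn : 0 < n) : 1 < ((n:ℝ) + a) * ((n:ℝ) + b) ^ r := by
  have h1 : (1:ℝ) ≤ ((n:ℝ) + b) ^ r :=
    Real.one_le_rpow (by have := n.cast_nonneg (α := ℝ); linarith) hr.le
  have h2 : (1:ℝ) ≤ (n:ℝ) := by exact_mod_cast hn
  nlinarith

private lemma jcount_key {a b r : ℝ} (ha : 1 < a) (hb : 1 < b) (hr : 0 < r)
    (y : ℝ) (n : ℕ) (hn : 0 < n) :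
    n ≤ ({m : ℕ | 0 < m ∧ ((m:ℝ) + a) * ((m:ℝ) + b) ^ r ≤ Real.exp y}).ncard ↔
      ((n:ℝ) + a) * ((n:ℝ) + b) ^ r ≤ Real.exp y := by
  classical
  set Δ : ℕ → ℝ := fun m : ℕ => ((m:ℝ) + a) * ((m:ℝ) + b) ^ r with hΔ
  have hmono := delta_mono ha hb hr
  by_cases hcase : Δ 1 ≤ Real.exp y
  · set B : ℕ := ⌈Real.exp y⌉₊ with hB
    have hmemB : ∀ m : ℕ, Δ m ≤ Real.exp y → m ≤ B := by
      intro m hm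
      have h : (m:ℝ) ≤ Real.exp y := le_trans (delta_ge ha hb hr m) hm
      calc m = ⌈(m:ℝ)⌉₊ := (Nat.ceil_natCast m).symm
        _ ≤ B := Nat.ceil_le_ceil h
    set m0 : ℕ := Nat.findGreatest (fun m => Δ m ≤ Real.exp y) B with hm0
    have h1B : 1 ≤ B := hmemB 1 hcase
    have hm01 : 1 ≤ m0 := Nat.le_findGreatest h1B hcase
    have hm0P : Δ m0 ≤ Real.exp y :=
      Nat.findGreatest_spec (P := fun m => Δ m ≤ Real.exp y) h1B hcase
    have hSeq : {m : ℕ | 0 < m ∧ Δ m ≤ Real.exp y} = Set.Ioc 0 m0 := by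
      ext m
      simp only [Set.mem_setOf_eq, Set.mem_Ioc]
      constructor
      · rintro ⟨h1, h2⟩
        exact ⟨h1, Nat.le_findGreatest (hmemB m h2) h2⟩
      · rintro ⟨h1, h2⟩
        exact ⟨h1, le_trans (hmono.le_iff_le.mpr h2) hm0P⟩
    rw [hSeq, ← Finset.coe_Ioc, Set.ncard_coe_finset, Nat.card_Ioc]
    simp only [Nat.sub_zero]
    constructor
    · intro h
      exact le_trans (hmono.le_iff_le.mpr h) hm0P
    · intro h
      exact Nat.le_findGreatest (hmemB n h) h
  · have hSempty : {m : ℕ | 0 < m ∧ Δ m ≤ Real.exp y} = ∅ := by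
      ext m
      simp only [Set.mem_setOf_eq, Set.mem_empty_iff_false, iff_false]
      rintro ⟨h1, h2⟩
      exact hcase (le_trans (hmono.le_iff_le.mpr h1) h2)
    rw [hSempty]
    simp only [Set.ncard_empty]
    constructor
    · omega
    · intro h
      exact absurd (le_trans (hmono.le_iff_le.mpr hn) h) hcase

private lemma cpow_combine {x w : ℝ} (hx : 0 < x) (hw : 0 < w) (p : ℂ) (r : ℝ) :
    ((x * w ^ r : ℝ) : ℂ) ^ p = (x:ℂ) ^ p * (w:ℂ) ^ (p * (r:ℂ)) := by
  rw [Complex.ofReal_mul, Complex.mul_cpow_ofReal_nonneg hx.le (Real.rpow_nonneg hw.le r),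
    Complex.ofReal_cpow hw.le, mul_comm p, Complex.cpow_mul_ofReal_nonneg hw.le,
    Complex.ofReal_cpow hw.le]

end Aux

theorem generalized_polylog_single_integral
    (a b : ℝ) (ha : 1 < a) (hb : 1 < b)
    (p q : ℂ) (hp : 0 < p.re) (hq : 0 < q.re)
    (hratio_re : 0 < (q / p).re) (hratio_im : (q / p).im = 0)
    (z : ℂ) (hz : ‖z‖ < 1) :
    genPolylog p q a b z =
      ((1 + a : ℝ) : ℂ) ^ p * ((1 + b : ℝ) : ℂ) ^ q *
        (z / (1 - z) +
          (p * z / (z - 1)) *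
            ∫ y in Set.Ioi (0 : ℝ), Complex.exp (-(p * (y : ℂ))) * z ^ (jCount p q a b y)) := by
  classical
  open Set in
  set r : ℝ := (q / p).re with hrdef
  have hr : 0 < r := hratio_re
  have hp0 : p ≠ 0 := fun h => by simp [h] at hp
  have hz1 : z ≠ 1 := fun h => by simp [h] at hz
  have hz1' : z - 1 ≠ 0 := sub_ne_zero.mpr hz1
  have hq_eq : q = p * (r : ℂ) := by
    have h1 : q / p = (r : ℂ) := Complex.ext rfl (by simpa using hratio_im)
    field_simp at h1
    rw [h1]
  set Δ : ℕ → ℝ := fun n : ℕ => ((n:ℝ) + a) * ((n:ℝ) + b) ^ r with hΔdef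
  set j : ℝ → ℕ := jCount p q a b with hjdef
  have hjkey : ∀ (y : ℝ) (n : ℕ), 0 < n → (n ≤ j y ↔ Δ n ≤ Real.exp y) := by
    intro y n hn
    exact jcount_key ha hb hr y n hn
  have hjmono : Monotone j := by
    intro y y' hyy'
    rcases Nat.eq_zero_or_pos (j y) with h0 | h0
    · omega
    · have h1 : Δ (j y) ≤ Real.exp y := (hjkey y (j y) h0).mp le_rfl
      exact (hjkey y' (j y) h0).mpr (h1.trans (Real.exp_le_exp.mpr hyy'))
  have hmeasj : Measurable j := hjmono.measurable
  -- positivity facts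
  have hΔpos : ∀ n : ℕ, 0 < Δ n := by
    intro n
    have h3 : (0:ℝ) < (n:ℝ) + b := by have := n.cast_nonneg (α := ℝ); linarith
    have h1 : (0:ℝ) < (n:ℝ) + a := by have := n.cast_nonneg (α := ℝ); linarith
    exact mul_pos h1 (Real.rpow_pos_of_pos h3 r)
  have hΔgt1 : ∀ k : ℕ, 1 < Δ (k + 1) := fun k => delta_gt_one ha hb hr k.succ_pos
  have hLpos : ∀ k : ℕ, 0 < Real.log (Δ (k + 1)) := fun k => Real.log_pos (hΔgt1 k)
  -- the family of indicator functions
  set g : ℕ → ℝ → ℂ := fun k y =>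
    Set.indicator (Ici (Real.log (Δ (k + 1))))
      (fun t : ℝ => Complex.exp (-(p * t)) * z ^ (k + 1)) y with hgdef
  -- each g k is integrable
  have hgint : ∀ k : ℕ, IntegrableOn (g k) (Ioi 0) := by
    intro k
    exact ((integrable_cexp_neg' p hp 0).mul_const _).indicator measurableSet_Ici
  -- integral of each g k
  have hgval : ∀ k : ℕ,
      ∫ y in Ioi (0:ℝ), g k y = ((Δ (k+1) : ℝ) : ℂ) ^ (-p) / p * z ^ (k + 1) := by
    intro k
    rw [hgdef]
    rw [integral_indicator measurableSet_Ici, Measure.restrict_restrict measurableSet_Ici]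
    have hinter : Ici (Real.log (Δ (k + 1))) ∩ Ioi (0:ℝ) = Ici (Real.log (Δ (k + 1))) := by
      apply Set.inter_eq_self_of_subset_left
      intro t ht
      exact lt_of_lt_of_le (hLpos k) ht
    rw [hinter, integral_Ici_eq_integral_Ioi, integral_mul_const,
      integral_cexp_neg_Ioi' p hp]
    congr 2
    rw [Complex.cpow_def_of_ne_zero (by exact_mod_cast (hΔpos (k+1)).ne'),
      ← Complex.ofReal_log (hΔpos (k+1)).le]
    congr 1
    ring
  -- rewrite each term of genPolylog
  set C : ℂ := ((1 + a : ℝ) : ℂ) ^ p * ((1 + b : ℝ) : ℂ) ^ q with hCdef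
  have hterm : ∀ k : ℕ,
      (C / ((((k : ℝ) + 1 + a : ℝ) : ℂ) ^ p * (((k : ℝ) + 1 + b : ℝ) : ℂ) ^ q)) * z ^ (k + 1)
        = C * p * ∫ y in Ioi (0:ℝ), g k y := by
    intro k
    have hx : (0:ℝ) < (k:ℝ) + 1 + a := by have := k.cast_nonneg (α := ℝ); linarith
    have hw : (0:ℝ) < (k:ℝ) + 1 + b := by have := k.cast_nonneg (α := ℝ); linarith
    have hden : (((k : ℝ) + 1 + a : ℝ) : ℂ) ^ p * (((k : ℝ) + 1 + b : ℝ) : ℂ) ^ q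
        = ((Δ (k+1) : ℝ) : ℂ) ^ p := by
      rw [hq_eq, ← cpow_combine hx hw p r]
      congr 2
      push_cast [hΔdef]
      ring_nf
    rw [hden, hgval k, Complex.cpow_neg]
    have hne : ((Δ (k+1) : ℝ) : ℂ) ^ p ≠ 0 := by
      rw [Ne, Complex.cpow_eq_zero_iff]
      push_neg
      intro h
      exact absurd h (by exact_mod_cast (hΔpos (k+1)).ne')
    field_simp
  -- summability of the integrals of norms
  set C0 : ℝ := ∫ y in Ioi (0:ℝ), Real.exp (-p.re * y) with hC0def
  have hnormle : ∀ k : ℕ,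
      (∫ y in Ioi (0:ℝ), ‖g k y‖) ≤ C0 * ‖z‖ ^ (k+1) := by
    intro k
    rw [hC0def, ← integral_mul_const]
    apply integral_mono ((hgint k).norm)
      ((exp_neg_integrableOn_Ioi 0 hp).mul_const _)
    intro y
    rw [hgdef]
    simp only [norm_indicator_eq_indicator_norm]
    refine (Set.indicator_le_self' (fun t _ => by positivity) y).trans ?_
    rw [norm_mul, Complex.norm_exp, norm_pow]
    apply le_of_eq
    congr 1
    simp [Complex.mul_re]
  have hsum : Summable fun k : ℕ => ∫ y in Ioi (0:ℝ), ‖g k y‖ := by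
    apply Summable.of_nonneg_of_le
      (fun k => integral_nonneg fun y => norm_nonneg _) hnormle
    apply Summable.mul_left
    have hgeo : Summable fun k : ℕ => ‖z‖ ^ k :=
      summable_geometric_of_lt_one (norm_nonneg z) hz
    have := hgeo.mul_right ‖z‖
    apply this.congr
    intro k
    rw [← pow_succ]
  -- swap sum and integral
  have hswap : ∑' k : ℕ, ∫ y in Ioi (0:ℝ), g k y
      = ∫ y in Ioi (0:ℝ), ∑' k : ℕ, g k y :=
    integral_tsum_of_summable_integral_norm (fun k => hgint k) hsum
  -- pointwise evaluation of the inner sum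
  have hpt : ∀ y : ℝ, (∑' k : ℕ, g k y)
      = Complex.exp (-(p * y)) * (z * (z ^ (j y) - 1) / (z - 1)) := by
    intro y
    have hmem : ∀ k : ℕ, y ∈ Ici (Real.log (Δ (k + 1))) ↔ (k + 1 ≤ j y) := by
      intro k
      rw [Set.mem_Ici, Real.log_le_iff_le_exp (hΔpos (k+1))]
      exact (hjkey y (k+1) k.succ_pos).symm
    have hz0 : ∀ k ∉ Finset.range (j y), g k y = 0 := by
      intro k hk
      rw [hgdef]
      simp only [Finset.mem_range, not_lt] at hk
      apply Set.indicator_of_notMem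
      rw [hmem k]
      omega
    rw [tsum_eq_sum hz0]
    have heach : ∀ k ∈ Finset.range (j y),
        g k y = Complex.exp (-(p * y)) * z ^ (k + 1) := by
      intro k hk
      rw [hgdef]
      apply Set.indicator_of_mem
      rw [hmem k]
      simp only [Finset.mem_range] at hk
      omega
    rw [Finset.sum_congr rfl heach]
    have : ∑ k ∈ Finset.range (j y), Complex.exp (-(p * y)) * z ^ (k + 1)
        = Complex.exp (-(p * y)) * z * ∑ k ∈ Finset.range (j y), z ^ k := by
      rw [Finset.mul_sum]
      congr 1
      funext k
      ring
    rw [this, geom_sum_eq hz1]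
    ring
  -- integrability for splitting
  have hint1 : IntegrableOn (fun y : ℝ => Complex.exp (-(p * y)) * z ^ (j y)) (Ioi 0) := by
    apply Integrable.mono' (g := fun y : ℝ => Real.exp (-p.re * y))
      (exp_neg_integrableOn_Ioi 0 hp)
    · apply AEStronglyMeasurable.mul
      · exact ((Complex.continuous_exp.comp
          ((continuous_const.mul Complex.continuous_ofReal).neg)).aestronglyMeasurable).restrict
      · exact ((measurable_from_nat (f := fun n => z ^ n)).comp hmeasj).aestronglyMeasurable.restrict
    · filter_upwards with y
      rw [norm_mul, Complex.norm_exp]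
      simp only [neg_mul, Complex.neg_re, Complex.mul_re, Complex.ofReal_re,
        Complex.ofReal_im, mul_zero, sub_zero]
      calc Real.exp (-(p.re * y)) * ‖z ^ (j y)‖
          ≤ Real.exp (-(p.re * y)) * 1 := by
            gcongr
            rw [norm_pow]
            exact pow_le_one₀ (norm_nonneg z) hz.le
        _ = Real.exp (-(p.re * y)) := mul_one _
  have hint2 : IntegrableOn (fun y : ℝ => Complex.exp (-(p * y))) (Ioi 0) :=
    integrable_cexp_neg' p hp 0
  -- final computation
  set I : ℂ := ∫ y in Ioi (0:ℝ), Complex.exp (-(p * y)) * z ^ (j y) with hIdef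
  have hI2 : ∫ y in Ioi (0:ℝ), Complex.exp (-(p * y)) = 1 / p := by
    rw [integral_cexp_neg_Ioi' p hp 0]
    simp
  have hmain : genPolylog p q a b z = C * p * ((z / (z - 1)) * (I - 1/p)) := by
    rw [genPolylog]
    calc ∑' k : ℕ, (C / ((((k : ℝ) + 1 + a : ℝ) : ℂ) ^ p * (((k : ℝ) + 1 + b : ℝ) : ℂ) ^ q)) * z ^ (k + 1)
        = ∑' k : ℕ, C * p * ∫ y in Ioi (0:ℝ), g k y := by
          congr 1; funext k; exact hterm k
      _ = C * p * ∑' k : ℕ, ∫ y in Ioi (0:ℝ), g k y := tsum_mul_left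
      _ = C * p * ∫ y in Ioi (0:ℝ), ∑' k : ℕ, g k y := by rw [hswap]
      _ = C * p * ∫ y in Ioi (0:ℝ),
            (z / (z-1)) * (Complex.exp (-(p * y)) * z ^ (j y) - Complex.exp (-(p * y))) := by
          congr 1
          apply integral_congr_ae
          filter_upwards with y
          rw [hpt y]
          ring
      _ = C * p * ((z / (z-1)) * (I - 1/p)) := by
          rw [integral_const_mul, integral_sub hint1 hint2, hI2]
  rw [hmain]
  have h1z : (1 : ℂ) - z ≠ 0 := fun h => hz1 (by linear_combination -h)
  field_simp
  ring
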